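/- Let E be a finite-dimensional real normed vector space and C : E → E a C^∞ map such that the induced multiplication ∘ is associative. Let E₁ and E₂ be Euler fields of weights d₁ and d₂ respectively, i.e. smooth vector fields with P_{E₁}(X,Y) = d₁·(X∘Y) and P_{E₂}(X,Y) = d₂·(X∘Y) for all smooth vector fields X, Y. Then the commutator [E₁, E₂] is an Euler field of weight zero: P_{[E₁,E₂]}(X,Y) = 0 for all smooth vector fields X, Y. -/

import Mathlib

open ContDiff

variable {E : Type*} [NormedAddCommGroup E] [NormedSpace ℝ E]

/-- Lie bracket of vector fields on a normed space:
`[X,Y](p) = (DY)(p)(X(p)) - (DX)(p)(Y(p))`. -/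
noncomputable def lieB (X Y : E → E) : E → E :=
  fun p => fderiv ℝ Y p (X p) - fderiv ℝ X p (Y p)

/-- Multiplication on vector fields induced by a vector potential `C`:
`(X ∘ Y)(p) = (D²C)(p)(X(p), Y(p))`. -/
noncomputable def mulC (C : E → E) (X Y : E → E) : E → E :=
  fun p => fderiv ℝ (fderiv ℝ C) p (X p) (Y p)

/-- The Hertling–Manin expression `P_X(Z,W) = [X, Z∘W] - [X,Z]∘W - Z∘[X,W]`. -/
noncomputable def hmP (C : E → E) (X Z W : E → E) : E → E :=
  fun p => lieB X (mulC C Z W) p - mulC C (lieB X Z) W p - mulC C Z (lieB X W) p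

lemma lieB_eq_lieBracket (X Y : E → E) : lieB X Y = VectorField.lieBracket ℝ X Y := rfl

lemma mulC_contDiff (C : E → E) (hC : ContDiff ℝ ∞ C) (X Y : E → E)
    (hX : ContDiff ℝ ∞ X) (hY : ContDiff ℝ ∞ Y) : ContDiff ℝ ∞ (mulC C X Y) := by
  have h2 : ContDiff ℝ ∞ (fderiv ℝ (fderiv ℝ C)) :=
    (hC.fderiv_right le_rfl).fderiv_right le_rfl
  exact (h2.clm_apply hX).clm_apply hY

lemma lieB_contDiff (X Y : E → E) (hX : ContDiff ℝ ∞ X) (hY : ContDiff ℝ ∞ Y) :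
    ContDiff ℝ ∞ (lieB X Y) := by
  rw [lieB_eq_lieBracket]
  exact hX.lieBracket_vectorField hY le_rfl

lemma lieB_jacobi (X Y Z : E → E) (hX : ContDiff ℝ ∞ X) (hY : ContDiff ℝ ∞ Y)
    (hZ : ContDiff ℝ ∞ Z) (p : E) :
    lieB (lieB X Y) Z p = lieB X (lieB Y Z) p - lieB Y (lieB X Z) p := by
  have h2 : (2 : WithTop ℕ∞) ≤ ∞ := WithTop.coe_le_coe.2 le_top
  have h := VectorField.leibniz_identity_lieBracket (𝕜 := ℝ) (by simp)
    (hX.contDiffAt.of_le h2) (hY.contDiffAt.of_le h2) (hZ.contDiffAt.of_le h2) (x := p)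
  simp only [lieB_eq_lieBracket]
  rw [eq_sub_iff_add_eq]
  exact h.symm

lemma lieB_comb (X f g h : E → E) (c : ℝ) (p : E) (hf : DifferentiableAt ℝ f p)
    (hg : DifferentiableAt ℝ g p) (hh : DifferentiableAt ℝ h p) :
    lieB X (fun q => c • f q + g q + h q) p = c • lieB X f p + lieB X g p + lieB X h p := by
  have h1 : fderiv ℝ (fun q => c • f q + g q + h q) p
      = c • fderiv ℝ f p + fderiv ℝ g p + fderiv ℝ h p := by
    rw [fderiv_fun_add (f := fun q => c • f q + g q) ((hf.const_smul c).add hg) hh,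
      fderiv_fun_add (f := fun q => c • f q) (hf.const_smul c) hg,
      fderiv_fun_const_smul hf]
  simp only [lieB, h1, ContinuousLinearMap.add_apply, ContinuousLinearMap.smul_apply,
    map_add, map_smul]
  module

/-- the commutator of two Euler fields is an Euler field of weight
zero. -/
theorem stmt14 {E : Type*} [NormedAddCommGroup E] [NormedSpace ℝ E] [FiniteDimensional ℝ E]
    (C : E → E) (hC : ContDiff ℝ ∞ C)
    (hassoc : ∀ p u v w : E,
      fderiv ℝ (fderiv ℝ C) p (fderiv ℝ (fderiv ℝ C) p u v) w
        = fderiv ℝ (fderiv ℝ C) p u (fderiv ℝ (fderiv ℝ C) p v w))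
    (E1 E2 : E → E) (hE1 : ContDiff ℝ ∞ E1) (hE2 : ContDiff ℝ ∞ E2)
    (d1 d2 : ℝ)
    (hEuler1 : ∀ X Y : E → E, ContDiff ℝ ∞ X → ContDiff ℝ ∞ Y →
      hmP C E1 X Y = fun p => d1 • mulC C X Y p)
    (hEuler2 : ∀ X Y : E → E, ContDiff ℝ ∞ X → ContDiff ℝ ∞ Y →
      hmP C E2 X Y = fun p => d2 • mulC C X Y p) :
    ∀ X Y : E → E, ContDiff ℝ ∞ X → ContDiff ℝ ∞ Y →
      hmP C (lieB E1 E2) X Y = fun _ => (0 : E) := by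
  have hone : (∞ : WithTop ℕ∞) ≠ 0 := by simp
  -- expansion of `lieB F (mulC C Z W)` for an Euler field `F` of weight `d`
  have key : ∀ (F : E → E) (d : ℝ),
      (∀ Z W : E → E, ContDiff ℝ ∞ Z → ContDiff ℝ ∞ W →
        hmP C F Z W = fun p => d • mulC C Z W p) →
      ∀ Z W : E → E, ContDiff ℝ ∞ Z → ContDiff ℝ ∞ W → ∀ p : E,
        lieB F (mulC C Z W) p
          = d • mulC C Z W p + mulC C (lieB F Z) W p + mulC C Z (lieB F W) p := by
    intro F d hE Z W hZ hW p
    have h := congrFun (hE Z W hZ hW) p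
    simp only [hmP] at h
    rw [sub_sub, sub_eq_iff_eq_add] at h
    rw [h]; abel
  intro X Y hX hY
  funext p
  -- smoothness of all the ingredients
  have hL1X := lieB_contDiff E1 X hE1 hX
  have hL2X := lieB_contDiff E2 X hE2 hX
  have hL1Y := lieB_contDiff E1 Y hE1 hY
  have hL2Y := lieB_contDiff E2 Y hE2 hY
  have hM := mulC_contDiff C hC X Y hX hY
  have hB1 := mulC_contDiff C hC (lieB E1 X) Y hL1X hY
  have hB2 := mulC_contDiff C hC (lieB E2 X) Y hL2X hY
  have hC1 := mulC_contDiff C hC X (lieB E1 Y) hX hL1Y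
  have hC2 := mulC_contDiff C hC X (lieB E2 Y) hX hL2Y
  -- rewrite `lieB E2 (mulC C X Y)` and `lieB E1 (mulC C X Y)` as explicit sums
  have hL2M : lieB E2 (mulC C X Y)
      = fun q => d2 • mulC C X Y q + mulC C (lieB E2 X) Y q + mulC C X (lieB E2 Y) q :=
    funext (key E2 d2 hEuler2 X Y hX hY)
  have hL1M : lieB E1 (mulC C X Y)
      = fun q => d1 • mulC C X Y q + mulC C (lieB E1 X) Y q + mulC C X (lieB E1 Y) q :=
    funext (key E1 d1 hEuler1 X Y hX hY)
  -- first-layer Jacobi identities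
  have hJM := lieB_jacobi E1 E2 (mulC C X Y) hE1 hE2 hM p
  have hJX := lieB_jacobi E1 E2 X hE1 hE2 hX p
  have hJY := lieB_jacobi E1 E2 Y hE1 hE2 hY p
  -- expand `lieB E1 (lieB E2 M)` and `lieB E2 (lieB E1 M)`
  have e1 : lieB E1 (lieB E2 (mulC C X Y)) p
      = d2 • lieB E1 (mulC C X Y) p + lieB E1 (mulC C (lieB E2 X) Y) p
        + lieB E1 (mulC C X (lieB E2 Y)) p := by
    rw [hL2M]
    exact lieB_comb E1 _ _ _ d2 p (hM.differentiable hone p)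
      (hB2.differentiable hone p) (hC2.differentiable hone p)
  have e2 : lieB E2 (lieB E1 (mulC C X Y)) p
      = d1 • lieB E2 (mulC C X Y) p + lieB E2 (mulC C (lieB E1 X) Y) p
        + lieB E2 (mulC C X (lieB E1 Y)) p := by
    rw [hL1M]
    exact lieB_comb E2 _ _ _ d1 p (hM.differentiable hone p)
      (hB1.differentiable hone p) (hC1.differentiable hone p)
  -- expand the `mulC` terms containing the double bracket via Jacobi
  have f1 : mulC C (lieB (lieB E1 E2) X) Y p
      = mulC C (lieB E1 (lieB E2 X)) Y p - mulC C (lieB E2 (lieB E1 X)) Y p := by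
    simp only [mulC, hJX, map_sub, ContinuousLinearMap.sub_apply]
  have f2 : mulC C X (lieB (lieB E1 E2) Y) p
      = mulC C X (lieB E1 (lieB E2 Y)) p - mulC C X (lieB E2 (lieB E1 Y)) p := by
    simp only [mulC, hJY, map_sub]
  -- all the second-layer Euler expansions
  have k11 := key E1 d1 hEuler1 X Y hX hY p
  have k12 := key E1 d1 hEuler1 (lieB E2 X) Y hL2X hY p
  have k13 := key E1 d1 hEuler1 X (lieB E2 Y) hX hL2Y p
  have k21 := key E2 d2 hEuler2 X Y hX hY p
  have k22 := key E2 d2 hEuler2 (lieB E1 X) Y hL1X hY p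
  have k23 := key E2 d2 hEuler2 X (lieB E1 Y) hX hL1Y p
  simp only [hmP, hJM, e1, e2, f1, f2, k11, k12, k13, k21, k22, k23]
  module
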